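/- Fix u,w ∈ U with s symmetric-wedge common neighbors and a asymmetric-wedge common neighbors. The number of balanced (2,k)-bicliques with U-side {u,w} equals C(s,k) + C(a,k) for any k ≥ 2. -/
import Mathlib


/-- With s symmetric-wedge and a asymmetric-wedge common neighbors of u,w,
the number of balanced (2,k)-bicliques with U-side {u,w} is C(s,k)+C(a,k),
for any k ≥ 2. -/
theorem balanced_biclique_count {V : Type*} [DecidableEq V]
    (N : Finset V) (su sw : V → ℤ) (k : ℕ) (hk : 2 ≤ k)
    (h : ∀ v ∈ N, (su v = 1 ∨ su v = -1) ∧ (sw v = 1 ∨ sw v = -1)) :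
    ((N.powersetCard k).filter
        (fun S => (∀ v ∈ S, su v = sw v) ∨ (∀ v ∈ S, su v ≠ sw v))).card
      = (N.filter (fun v => su v = sw v)).card.choose k
        + (N.filter (fun v => su v ≠ sw v)).card.choose k := by
  classical
  rw [← Finset.card_powersetCard, ← Finset.card_powersetCard,
    ← Finset.card_union_of_disjoint]
  · congr 1
    ext S
    simp only [Finset.mem_filter, Finset.mem_powersetCard, Finset.mem_union,
      Finset.subset_iff, Finset.mem_filter]
    constructor
    · rintro ⟨⟨hsub, hcard⟩, hS⟩
      rcases hS with hS | hS
      · exact Or.inl ⟨fun v hv => ⟨hsub hv, hS v hv⟩, hcard⟩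
      · exact Or.inr ⟨fun v hv => ⟨hsub hv, hS v hv⟩, hcard⟩
    · rintro (⟨hsub, hcard⟩ | ⟨hsub, hcard⟩)
      · exact ⟨⟨fun v hv => (hsub hv).1, hcard⟩, Or.inl fun v hv => (hsub hv).2⟩
      · exact ⟨⟨fun v hv => (hsub hv).1, hcard⟩, Or.inr fun v hv => (hsub hv).2⟩
  · rw [Finset.disjoint_left]
    intro S h1 h2
    rw [Finset.mem_powersetCard] at h1 h2
    have hc : 0 < S.card := by omega
    obtain ⟨v, hv⟩ := Finset.card_pos.mp hc
    exact (Finset.mem_filter.mp (h2.1 hv)).2 (Finset.mem_filter.mp (h1.1 hv)).2
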